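/- Let G be a connected simple graph with minimum degree δ ≥ 2. Then (δ^(13/2)/(√32 · (δ−1)³)) · X(G) ≤ AZI(G), with equality if and only if G is a δ-regular graph. -/

import Mathlib

open Finset SimpleGraph

variable {V : Type*} [Fintype V] [DecidableEq V]

/-- The sum-connectivity index `X(G) = Σ_{uv ∈ E(G)} 1/√(d_u + d_v)`. -/
noncomputable def sumConnIndex (G : SimpleGraph V) [DecidableRel G.Adj] : ℝ :=
  ∑ e ∈ G.edgeFinset, Sym2.lift
    ⟨fun u v => 1 / Real.sqrt ((G.degree u : ℝ) + (G.degree v : ℝ)),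
     fun u v => by dsimp only; rw [add_comm ((G.degree u : ℝ)) ((G.degree v : ℝ))]⟩ e

/-- The Randić index `R(G) = Σ_{uv ∈ E(G)} 1/√(d_u d_v)`. -/
noncomputable def randicIndex (G : SimpleGraph V) [DecidableRel G.Adj] : ℝ :=
  ∑ e ∈ G.edgeFinset, Sym2.lift
    ⟨fun u v => 1 / Real.sqrt ((G.degree u : ℝ) * (G.degree v : ℝ)),
     fun u v => by dsimp only; rw [mul_comm ((G.degree u : ℝ)) ((G.degree v : ℝ))]⟩ e

/-- The harmonic index `H(G) = Σ_{uv ∈ E(G)} 2/(d_u + d_v)`. -/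
noncomputable def harmonicIndex (G : SimpleGraph V) [DecidableRel G.Adj] : ℝ :=
  ∑ e ∈ G.edgeFinset, Sym2.lift
    ⟨fun u v => 2 / ((G.degree u : ℝ) + (G.degree v : ℝ)),
     fun u v => by dsimp only; rw [add_comm ((G.degree u : ℝ)) ((G.degree v : ℝ))]⟩ e

/-- The atom-bond connectivity index `ABC(G) = Σ_{uv ∈ E(G)} √((d_u + d_v − 2)/(d_u d_v))`. -/
noncomputable def abcIndex (G : SimpleGraph V) [DecidableRel G.Adj] : ℝ :=
  ∑ e ∈ G.edgeFinset, Sym2.lift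
    ⟨fun u v => Real.sqrt (((G.degree u : ℝ) + (G.degree v : ℝ) - 2) /
        ((G.degree u : ℝ) * (G.degree v : ℝ))),
     fun u v => by dsimp only; rw [add_comm ((G.degree u : ℝ)) ((G.degree v : ℝ)),
        mul_comm ((G.degree u : ℝ)) ((G.degree v : ℝ))]⟩ e

/-- The first geometric-arithmetic index `GA(G) = Σ_{uv ∈ E(G)} 2√(d_u d_v)/(d_u + d_v)`. -/
noncomputable def geoArithIndex (G : SimpleGraph V) [DecidableRel G.Adj] : ℝ :=
  ∑ e ∈ G.edgeFinset, Sym2.lift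
    ⟨fun u v => 2 * Real.sqrt ((G.degree u : ℝ) * (G.degree v : ℝ)) /
        ((G.degree u : ℝ) + (G.degree v : ℝ)),
     fun u v => by dsimp only; rw [mul_comm ((G.degree u : ℝ)) ((G.degree v : ℝ)),
        add_comm ((G.degree u : ℝ)) ((G.degree v : ℝ))]⟩ e

/-- The augmented Zagreb index `AZI(G) = Σ_{uv ∈ E(G)} (d_u d_v/(d_u + d_v − 2))³`. -/
noncomputable def augZagrebIndex (G : SimpleGraph V) [DecidableRel G.Adj] : ℝ :=
  ∑ e ∈ G.edgeFinset, Sym2.lift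
    ⟨fun u v => ((G.degree u : ℝ) * (G.degree v : ℝ) /
        ((G.degree u : ℝ) + (G.degree v : ℝ) - 2)) ^ 3,
     fun u v => by dsimp only; rw [mul_comm ((G.degree u : ℝ)) ((G.degree v : ℝ)),
        add_comm ((G.degree u : ℝ)) ((G.degree v : ℝ))]⟩ e

/-- The modified second Zagreb index `M₂*(G) = Σ_{uv ∈ E(G)} 1/(d_u d_v)`. -/
noncomputable def modSecondZagrebIndex (G : SimpleGraph V) [DecidableRel G.Adj] : ℝ :=
  ∑ e ∈ G.edgeFinset, Sym2.lift
    ⟨fun u v => 1 / ((G.degree u : ℝ) * (G.degree v : ℝ)),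
     fun u v => by dsimp only; rw [mul_comm ((G.degree u : ℝ)) ((G.degree v : ℝ))]⟩ e


lemma key_ineq (δ x y : ℝ) (hδ : 2 ≤ δ) (hx : δ ≤ x) (hy : δ ≤ y) :
    δ ^ ((13 : ℝ) / 2) / (Real.sqrt 32 * (δ - 1) ^ 3) * (1 / Real.sqrt (x + y)) ≤
      (x * y / (x + y - 2)) ^ 3 ∧
    (δ ^ ((13 : ℝ) / 2) / (Real.sqrt 32 * (δ - 1) ^ 3) * (1 / Real.sqrt (x + y)) =
      (x * y / (x + y - 2)) ^ 3 ↔ x = δ ∧ y = δ) := by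
  have hδ0 : (0:ℝ) < δ := by linarith
  have hδ1 : (0:ℝ) < δ - 1 := by linarith
  have hxy0 : (0:ℝ) < x + y := by linarith
  have hxy2 : (0:ℝ) < x + y - 2 := by linarith
  have h2δ2 : (0:ℝ) < 2*δ - 2 := by linarith
  have hxpos : (0:ℝ) < x := by linarith
  have hypos : (0:ℝ) < y := by linarith
  set K := δ ^ ((13 : ℝ) / 2) / (Real.sqrt 32 * (δ - 1) ^ 3) with hKdef
  set A := δ^2 / (2*δ - 2) with hAdef
  have h32 : Real.sqrt 32 = 4 * Real.sqrt 2 := by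
    rw [show (32:ℝ) = 4^2 * 2 by norm_num, Real.sqrt_mul (by positivity), Real.sqrt_sq (by norm_num)]
  have h2d : Real.sqrt (2*δ) = Real.sqrt 2 * Real.sqrt δ := Real.sqrt_mul (by norm_num) δ
  have h135 : δ ^ ((13:ℝ)/2) = δ^6 * Real.sqrt δ := by
    rw [Real.sqrt_eq_rpow, ← Real.rpow_natCast δ 6, ← Real.rpow_add hδ0]
    norm_num
  have hs2 : Real.sqrt 2 > 0 := by positivity
  have hsd : Real.sqrt δ > 0 := Real.sqrt_pos.mpr hδ0
  have e2 : Real.sqrt 2 ^ 2 = 2 := Real.sq_sqrt (by norm_num)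
  have hK : K = A^3 * Real.sqrt (2*δ) := by
    rw [hKdef, hAdef, h135, h32, h2d]
    field_simp
    linear_combination (-4) * e2
  have hs2δ : (0:ℝ) < Real.sqrt (2*δ) := Real.sqrt_pos.mpr (by linarith)
  have hsxy : (0:ℝ) < Real.sqrt (x+y) := Real.sqrt_pos.mpr hxy0
  have hApos : (0:ℝ) < A := by positivity
  have hKpos : (0:ℝ) < K := by rw [hK]; positivity
  have hKA : K * (1 / Real.sqrt (2*δ)) = A^3 := by
    rw [hK]; field_simp
  have hsqle : Real.sqrt (2*δ) ≤ Real.sqrt (x+y) := Real.sqrt_le_sqrt (by linarith)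
  have step1 : K * (1 / Real.sqrt (x+y)) ≤ A^3 := by
    rw [← hKA]
    exact mul_le_mul_of_nonneg_left (one_div_le_one_div_of_le hs2δ hsqle) hKpos.le
  have hbase : A ≤ x * y / (x + y - 2) := by
    rw [hAdef, div_le_div_iff₀ h2δ2 hxy2]
    nlinarith [mul_nonneg (sub_nonneg.mpr hx) (sub_nonneg.mpr hy),
      mul_nonneg (sub_nonneg.mpr hx) (by linarith : (0:ℝ) ≤ δ - 2),
      mul_nonneg (sub_nonneg.mpr hy) (by linarith : (0:ℝ) ≤ δ - 2)]
  have step2 : A^3 ≤ (x * y / (x + y - 2)) ^ 3 := pow_le_pow_left₀ hApos.le hbase 3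
  refine ⟨step1.trans step2, ?_, ?_⟩
  · intro h
    have he1 : K * (1 / Real.sqrt (x+y)) = A^3 :=
      le_antisymm step1 (by rw [h]; exact step2)
    rw [← hKA] at he1
    have hc := mul_left_cancel₀ (ne_of_gt hKpos) he1
    have hss : Real.sqrt (x+y) = Real.sqrt (2*δ) := by
      field_simp at hc
      linarith
    have h1 := Real.sq_sqrt hxy0.le
    have h2 := Real.sq_sqrt (show (0:ℝ) ≤ 2*δ by linarith)
    rw [hss] at h1
    constructor <;> linarith
  · rintro ⟨hx1, hy1⟩
    rw [hx1, hy1, show δ * δ / (δ + δ - 2) = A by rw [hAdef]; ring_nf,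
      show δ + δ = 2*δ by ring, hKA]

variable (G : SimpleGraph V) [DecidableRel G.Adj]

theorem stmt16 (hG : G.Connected) (hδ : 2 ≤ G.minDegree) :
    (G.minDegree : ℝ) ^ ((13 : ℝ) / 2) / (Real.sqrt 32 * ((G.minDegree : ℝ) - 1) ^ 3) *
        sumConnIndex G ≤ augZagrebIndex G ∧
    ((G.minDegree : ℝ) ^ ((13 : ℝ) / 2) / (Real.sqrt 32 * ((G.minDegree : ℝ) - 1) ^ 3) *
        sumConnIndex G = augZagrebIndex G ↔
      G.IsRegularOfDegree G.minDegree) := by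
  classical
  set n := G.minDegree with hn
  set δ : ℝ := (n : ℝ) with hδr
  have hδ2 : (2:ℝ) ≤ δ := by rw [hδr]; exact_mod_cast hδ
  have hdeg : ∀ v, δ ≤ (G.degree v : ℝ) := fun v => by
    rw [hδr]; exact_mod_cast G.minDegree_le_degree v
  set K := δ ^ ((13 : ℝ) / 2) / (Real.sqrt 32 * (δ - 1) ^ 3) with hK
  have hterm : ∀ e ∈ G.edgeFinset,
      K * Sym2.lift
        ⟨fun u v => 1 / Real.sqrt ((G.degree u : ℝ) + (G.degree v : ℝ)),
         fun u v => by dsimp only; rw [add_comm ((G.degree u : ℝ)) ((G.degree v : ℝ))]⟩ e ≤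
      Sym2.lift
        ⟨fun u v => ((G.degree u : ℝ) * (G.degree v : ℝ) /
            ((G.degree u : ℝ) + (G.degree v : ℝ) - 2)) ^ 3,
         fun u v => by dsimp only; rw [mul_comm ((G.degree u : ℝ)) ((G.degree v : ℝ)),
            add_comm ((G.degree u : ℝ)) ((G.degree v : ℝ))]⟩ e := by
    intro e _
    induction e using Sym2.ind with
    | _ u v =>
      simp only [Sym2.lift_mk]
      exact (key_ineq δ _ _ hδ2 (hdeg u) (hdeg v)).1
  have hmul : K * sumConnIndex G = ∑ e ∈ G.edgeFinset,
      K * Sym2.lift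
        ⟨fun u v => 1 / Real.sqrt ((G.degree u : ℝ) + (G.degree v : ℝ)),
         fun u v => by dsimp only; rw [add_comm ((G.degree u : ℝ)) ((G.degree v : ℝ))]⟩ e := by
    rw [sumConnIndex, Finset.mul_sum]
  constructor
  · rw [hmul]
    exact Finset.sum_le_sum hterm
  · rw [hmul, augZagrebIndex, Finset.sum_eq_sum_iff_of_le hterm]
    constructor
    · intro h v
      have hdv : 0 < G.degree v := by
        have := G.minDegree_le_degree v
        omega
      obtain ⟨w, hvw⟩ := (G.degree_pos_iff_exists_adj v).mp hdv
      have hmem : s(v, w) ∈ G.edgeFinset := by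
        rw [SimpleGraph.mem_edgeFinset, SimpleGraph.mem_edgeSet]; exact hvw
      have := h _ hmem
      simp only [Sym2.lift_mk] at this
      have heq := ((key_ineq δ _ _ hδ2 (hdeg v) (hdeg w)).2).mp this
      have h2 : (G.degree v : ℝ) = (n : ℝ) := by rw [← hδr]; exact heq.1
      exact_mod_cast h2
    · intro hreg
      intro e he
      induction e using Sym2.ind with
      | _ u v =>
        simp only [Sym2.lift_mk]
        exact ((key_ineq δ _ _ hδ2 (hdeg u) (hdeg v)).2).mpr
          ⟨by rw [hreg u], by rw [hreg v]⟩
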